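/- (Coverage Bound) For a deterministic ND protocol with reception period T_C, total window length Σ d_k per period, beacon length ω, and transmission duty-cycle β, the worst-case latency satisfies L ≥ ⌈T_C / Σ_{k=1}^{n_C} d_k⌉ · (ω/β). Formally: given M = ⌈T_C / Σ d_k⌉ and average beacon gap λ̄ = ω/β, the supremum over windows of M consecutive beacon gaps of their sum is at least M·ω/β. -/

import Mathlib

open Filter

/-- Coverage Bound: for a deterministic protocol with beacon gaps of Cesàro average
`ω/β` and `M = ⌈T_C / Σ d_k⌉` beacons needed per window, the worst-case latency
(the supremum of sums of `M` consecutive gaps) is at least `M · ω/β`. -/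
theorem coverage_bound (T d ω β : ℝ) (hT : 0 < T) (hd : 0 < d)
    (hω : 0 < ω) (hβ : 0 < β)
    (l : ℕ → ℝ) (hl : ∀ i, 0 < l i)
    (hces : Tendsto (fun n : ℕ => (∑ i ∈ Finset.range n, l i) / n) atTop
      (nhds (ω / β)))
    (M : ℕ) (hM : (M : ℤ) = ⌈T / d⌉) :
    ∀ ε : ℝ, 0 < ε →
      ∃ j : ℕ, (M : ℝ) * (ω / β) - ε < ∑ i ∈ Finset.range M, l (j + i) := by
  intro ε hε
  by_cases hM0 : M = 0
  · exact ⟨0, by simp [hM0]; linarith⟩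
  have hM1 : 1 ≤ M := Nat.one_le_iff_ne_zero.mpr hM0
  have hMpos : (0 : ℝ) < M := by exact_mod_cast Nat.pos_of_ne_zero hM0
  by_contra hcon
  push_neg at hcon
  set c := ω / β with hc
  have key : ∀ k : ℕ, ∑ i ∈ Finset.range (k * M), l i ≤ k * ((M : ℝ) * c - ε) := by
    intro k
    induction k with
    | zero => simp
    | succ k ih =>
      have hsplit : ∑ i ∈ Finset.range ((k + 1) * M), l i
          = ∑ i ∈ Finset.range (k * M), l i + ∑ i ∈ Finset.range M, l (k * M + i) := by
        rw [add_mul, one_mul, Finset.sum_range_add]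
      rw [hsplit]
      have h2 := hcon (k * M)
      push_cast
      linarith
  have hmul : Tendsto (fun k : ℕ => k * M) atTop atTop :=
    tendsto_atTop_mono (fun k => Nat.le_mul_of_pos_right k (Nat.pos_of_ne_zero hM0))
      tendsto_id
  have htend : Tendsto (fun k : ℕ => (∑ i ∈ Finset.range (k * M), l i) / ((k * M : ℕ) : ℝ))
      atTop (nhds c) := hces.comp hmul
  have hle : c ≤ c - ε / M := by
    refine le_of_tendsto htend ?_
    filter_upwards [eventually_ge_atTop 1] with k hk
    have hkpos : (0 : ℝ) < k := by exact_mod_cast hk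
    have hden : (0 : ℝ) < ((k * M : ℕ) : ℝ) := by
      push_cast; positivity
    rw [div_le_iff₀ hden]
    have := key k
    push_cast
    have heq : (c - ε / M) * ((k : ℝ) * M) = k * ((M : ℝ) * c - ε) := by
      field_simp
    rw [heq]
    exact this
  have : ε / M ≤ 0 := by linarith
  have : 0 < ε / M := div_pos hε hMpos
  linarith
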